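/- Every set C ⊂ ℝ^d of (d+1)(r−1)+1 points has r pairwise disjoint subsets A_1, …, A_r with ⋂_{i=1}^r conv(A_i) ≠ ∅ (Tverberg's theorem). -/

import Mathlib

set_option maxHeartbeats 1000000

open Finset RealInnerProductSpace


section helpers
variable {ι : Type*} [Fintype ι] {E : Type*} [AddCommGroup E] [Module ℝ E]

lemma mem_convexHull_range_iff (f : ι → E) (x : E) :
    x ∈ convexHull ℝ (Set.range f) ↔
      ∃ w : ι → ℝ, (∀ i, 0 ≤ w i) ∧ ∑ i, w i = 1 ∧ ∑ i, w i • f i = x := by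
  classical
  constructor
  · intro hx
    rw [convexHull_range_eq_exists_affineCombination] at hx
    obtain ⟨s, w, hw0, hw1, hx⟩ := hx
    refine ⟨fun i => if i ∈ s then w i else 0, fun i => by by_cases h : i ∈ s <;> simp [h, hw0 i], ?_, ?_⟩
    · rw [Finset.sum_ite_mem, Finset.univ_inter, hw1]
    · rw [Finset.affineCombination_eq_linear_combination s f w hw1] at hx
      rw [← hx]
      rw [Finset.sum_congr rfl (fun i (_ : i ∈ Finset.univ) =>
        (ite_smul _ _ _ _ : (if i ∈ s then w i else 0) • f i = _)),
        ]
      simp [Finset.sum_ite_mem]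
  · rintro ⟨w, hw0, hw1, hx⟩
    have := Finset.centerMass_mem_convexHull (s := Set.range f) Finset.univ
      (fun i _ => hw0 i) (by rw [hw1]; norm_num) (fun i _ => Set.mem_range_self i)
    rwa [Finset.centerMass, hw1, inv_one, one_smul, hx] at this

end helpers


variable {F : Type*} [NormedAddCommGroup F] [InnerProductSpace ℝ F]

lemma min_inner_ge {K : Set F} (hK : Convex ℝ K) {x y : F} (hx : x ∈ K) (hy : y ∈ K)
    (hmin : ∀ z ∈ K, ‖x‖ ≤ ‖z‖) : ‖x‖ ^ 2 ≤ ⟪x, y⟫ := by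
  by_contra hcon
  push_neg at hcon
  have hxy : ⟪x, y - x⟫ = ⟪x, y⟫ - ‖x‖ ^ 2 := by
    rw [inner_sub_right, real_inner_self_eq_norm_sq]
  set A : ℝ := ‖x‖ ^ 2 - ⟪x, y⟫ with hA
  have hA0 : 0 < A := by simp [hA]; linarith
  set B : ℝ := ‖y - x‖ ^ 2 with hB
  have hB0 : 0 ≤ B := by positivity
  set s : ℝ := if B ≤ A then 1 else A / B with hs
  have hs0 : 0 < s := by
    rw [hs]; split_ifs with h
    · norm_num
    · push_neg at h
      exact div_pos hA0 (lt_trans hA0 h)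
  have hs1 : s ≤ 1 := by
    rw [hs]; split_ifs with h
    · exact le_rfl
    · push_neg at h
      rw [div_le_one (by linarith)]
      linarith
  have hzK : (1 - s) • x + s • y ∈ K := hK hx hy (by linarith) hs0.le (by ring)
  have hle : ‖x‖ ≤ ‖(1 - s) • x + s • y‖ := hmin _ hzK
  have heq : (1 - s) • x + s • y = x + s • (y - x) := by
    rw [smul_sub]; module
  rw [heq] at hle
  have hsq : ‖x + s • (y - x)‖ ^ 2 = ‖x‖ ^ 2 + 2 * (s * ⟪x, y - x⟫) + s ^ 2 * B := by
    rw [norm_add_sq_real, real_inner_smul_right, norm_smul, Real.norm_eq_abs,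
      abs_of_pos hs0, hB]
    ring
  have hle2 : ‖x‖ ^ 2 ≤ ‖x + s • (y - x)‖ ^ 2 := by
    apply pow_le_pow_left₀ (norm_nonneg x) hle _
  rw [hsq, hxy] at hle2
  -- so 0 ≤ -2 s A + s^2 B
  have key : 2 * s * A ≤ s ^ 2 * B := by nlinarith
  rw [hs] at key
  split_ifs at key with h
  · nlinarith
  · push_neg at h
    have hBpos : 0 < B := by linarith
    rw [div_pow] at key
    have e1 : 2 * (A / B) * A = 2 * A ^ 2 / B := by ring
    have e2 : A ^ 2 / B ^ 2 * B = A ^ 2 / B := by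
      field_simp
    have e3 : 2 * A ^ 2 / B = 2 * (A ^ 2 / B) := by ring
    rw [e1, e2, e3] at key
    have : 0 < A ^ 2 / B := by positivity
    linarith

lemma exists_inner_nonpos {C : Finset F} (h0 : (0 : F) ∈ convexHull ℝ (C : Set F)) (x : F) :
    ∃ c ∈ C, ⟪x, c⟫ ≤ 0 := by
  classical
  rw [Finset.mem_convexHull] at h0
  obtain ⟨w, hw0, hw1, hcm⟩ := h0
  by_contra hcon
  push_neg at hcon
  have hcm' : ∑ c ∈ C, w c • c = 0 := by
    rw [Finset.centerMass_eq_of_sum_1 _ _ hw1] at hcm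
    simpa using hcm
  have h1 : ∑ c ∈ C, w c * ⟪x, c⟫ = 0 := by
    have := congrArg (fun z => ⟪x, z⟫) hcm'
    simpa [inner_sum, real_inner_smul_right] using this
  obtain ⟨c₀, hc₀, hwc₀⟩ : ∃ c ∈ C, 0 < w c := by
    by_contra hc
    push_neg at hc
    have : ∑ c ∈ C, w c ≤ 0 := Finset.sum_nonpos hc
    linarith
  have : 0 < ∑ c ∈ C, w c * ⟪x, c⟫ := by
    apply Finset.sum_pos' (fun c hc => mul_nonneg (hw0 c hc) (hcon c hc).le)
    exact ⟨c₀, hc₀, mul_pos hwc₀ (hcon c₀ hc₀)⟩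
  linarith

theorem colorful_caratheodory [FiniteDimensional ℝ F] {n : ℕ}
    (hn : Module.finrank ℝ F + 1 = n) (C : Fin n → Finset F)
    (h0 : ∀ j, (0 : F) ∈ convexHull ℝ (C j : Set F)) :
    ∃ t : Fin n → F, (∀ j, t j ∈ C j) ∧ (0 : F) ∈ convexHull ℝ (Set.range t) := by
  classical
  subst hn
  have hne : ∀ j, (C j : Set F).Nonempty := fun j =>
    convexHull_nonempty_iff.mp ⟨0, h0 j⟩
  -- the type of transversals
  have hTne : Nonempty (∀ j, {y // y ∈ C j}) :=
    ⟨fun j => ⟨(hne j).choose, (hne j).choose_spec⟩⟩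
  set K : (∀ j, {y // y ∈ C j}) → Set F :=
    fun t => convexHull ℝ (Set.range fun j => (t j : F)) with hK
  have hKconv : ∀ t, Convex ℝ (K t) := fun t => convex_convexHull ℝ _
  set U : Set F := ⋃ t, K t with hU
  have hUc : IsCompact U :=
    isCompact_iUnion fun t => (Set.finite_range _).isCompact_convexHull (𝕜 := ℝ)
  have hUne : U.Nonempty := by
    obtain ⟨t⟩ := hTne
    exact ⟨(t 0 : F), Set.mem_iUnion.mpr ⟨t, subset_convexHull ℝ _ (Set.mem_range_self 0)⟩⟩
  obtain ⟨x, hxU, hxmin⟩ := hUc.exists_isMinOn hUne continuous_norm.continuousOn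
  have hxmin' : ∀ z ∈ U, ‖x‖ ≤ ‖z‖ := fun z hz => hxmin hz
  have hKU : ∀ t, K t ⊆ U := fun t => Set.subset_iUnion K t
  by_cases hx0 : x = 0
  · obtain ⟨t0, hxK⟩ := Set.mem_iUnion.mp hxU
    exact ⟨fun j => (t0 j : F), fun j => (t0 j).2, hx0 ▸ hxK⟩
  exfalso
  obtain ⟨t0, hxK⟩ := Set.mem_iUnion.mp hxU
  set f : Fin (Module.finrank ℝ F + 1) → F := fun j => (t0 j : F) with hf
  have hfK : ∀ j, f j ∈ K t0 := fun j => subset_convexHull ℝ _ (Set.mem_range_self j)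
  obtain ⟨μ0, hμ00, hμ01, hμ0x⟩ := (mem_convexHull_range_iff f x).mp hxK
  have hxsq : (0:ℝ) < ‖x‖ ^ 2 := by
    have : 0 < ‖x‖ := norm_pos_iff.mpr hx0
    positivity
  -- Step: find a convex combination for x with a vanishing coefficient
  have hzero : ∃ (μ : Fin (Module.finrank ℝ F + 1) → ℝ) (j : Fin (Module.finrank ℝ F + 1)),
      (∀ i, 0 ≤ μ i) ∧ ∑ i, μ i = 1 ∧ ∑ i, μ i • f i = x ∧ μ j = 0 := by
    by_cases hex : ∃ j, μ0 j = 0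
    · exact ⟨μ0, hex.choose, hμ00, hμ01, hμ0x, hex.choose_spec⟩
    push_neg at hex
    have hpos : ∀ j, 0 < μ0 j := fun j => lt_of_le_of_ne (hμ00 j) (Ne.symm (hex j))
    -- all points f j lie on the hyperplane ⟪x, ·⟫ = ‖x‖²
    have hge : ∀ j, ‖x‖ ^ 2 ≤ ⟪x, f j⟫ := fun j =>
      min_inner_ge (hKconv t0) hxK (hfK j) (fun z hz => hxmin' z (hKU t0 hz))
    have hsum0 : ∑ j, μ0 j * (⟪x, f j⟫ - ‖x‖ ^ 2) = 0 := by
      have h1 : ∑ j, μ0 j * ⟪x, f j⟫ = ‖x‖ ^ 2 := by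
        have := congrArg (fun z => ⟪x, z⟫) hμ0x
        simp only [inner_sum, real_inner_smul_right] at this
        rw [this, real_inner_self_eq_norm_sq]
      rw [Finset.sum_congr rfl fun j _ => (mul_sub (μ0 j) _ _ : _ = _)]
      rw [Finset.sum_sub_distrib, h1, ← Finset.sum_mul, hμ01]
      ring
    have heqh : ∀ j, ⟪x, f j⟫ = ‖x‖ ^ 2 := by
      intro j
      have hterm := (Finset.sum_eq_zero_iff_of_nonneg
        (fun i _ => mul_nonneg (hμ00 i) (sub_nonneg.mpr (hge i)))).mp hsum0 j (mem_univ j)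
      have := mul_eq_zero.mp hterm
      rcases this with h | h
      · exact absurd h (hex j)
      · linarith [sub_eq_zero.mp h]
    -- differences lie in the orthogonal complement of x, which has dimension N - 1
    set W : Submodule ℝ F := (ℝ ∙ x)ᗮ with hW
    have hWrank : Module.finrank ℝ W + 1 = Module.finrank ℝ F := by
      have h1 : Module.finrank ℝ (ℝ ∙ x) = 1 := finrank_span_singleton hx0
      have h2 := Submodule.finrank_add_finrank_orthogonal (K := (ℝ ∙ x))
      rw [h1] at h2
      rw [hW]
      omega
    set v : Fin (Module.finrank ℝ F) → W := fun i =>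
      ⟨f i.succ - f 0, Submodule.mem_orthogonal_singleton_iff_inner_right.mpr (by
        rw [inner_sub_right, heqh, heqh]; ring)⟩ with hv
    have hnli : ¬ LinearIndependent ℝ v := by
      intro hli
      have := hli.fintype_card_le_finrank
      simp only [Fintype.card_fin] at this
      omega
    obtain ⟨g, hg0, i0, hgi0⟩ := Fintype.not_linearIndependent_iff.mp hnli
    have hg0' : ∑ i, g i • (f i.succ - f 0) = 0 := by
      have := congrArg (Subtype.val) hg0
      simpa [hv] using this
    set w : Fin (Module.finrank ℝ F + 1) → ℝ := Fin.cases (-∑ i, g i) g with hw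
    have hwsum : ∑ j, w j = 0 := by
      rw [Fin.sum_univ_succ]
      simp [hw]
    have hgsucc : ∑ i, g i • f i.succ = (∑ i, g i) • f 0 := by
      have h2 : ∑ i, (g i • f i.succ - g i • f 0) = 0 := by
        simpa [smul_sub] using hg0'
      rw [Finset.sum_sub_distrib, sub_eq_zero] at h2
      rw [h2, Finset.sum_smul]
    have hwvec : ∑ j, w j • f j = 0 := by
      rw [Fin.sum_univ_succ]
      simp only [hw, Fin.cases_zero, Fin.cases_succ]
      rw [hgsucc, neg_smul]
      abel
    have hwne : w i0.succ ≠ 0 := by simpa [hw] using hgi0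
    -- make sure some coefficient is positive, replacing w by -w if necessary
    obtain ⟨w, hwsum, hwvec, j1, hwj1⟩ : ∃ w : Fin (Module.finrank ℝ F + 1) → ℝ,
        ∑ j, w j = 0 ∧ ∑ j, w j • f j = 0 ∧ ∃ j, 0 < w j := by
      rcases lt_trichotomy (w i0.succ) 0 with h | h | h
      · refine ⟨-w, by simp [hwsum], ?_, i0.succ, by simpa using h⟩
        simp only [Pi.neg_apply, neg_smul, Finset.sum_neg_distrib, hwvec, neg_zero]
      · exact absurd h hwne
      · exact ⟨w, hwsum, hwvec, i0.succ, h⟩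
    set P : Finset (Fin (Module.finrank ℝ F + 1)) := univ.filter (fun j => 0 < w j) with hP
    obtain ⟨j₀, hj₀P, hj₀min⟩ := P.exists_min_image (fun j => μ0 j / w j)
      ⟨j1, Finset.mem_filter.mpr ⟨mem_univ _, hwj1⟩⟩
    have hwj₀ : 0 < w j₀ := (Finset.mem_filter.mp hj₀P).2
    set ε : ℝ := μ0 j₀ / w j₀ with hε
    have hε0 : 0 ≤ ε := div_nonneg (hμ00 j₀) hwj₀.le
    refine ⟨fun j => μ0 j - ε * w j, j₀, ?_, ?_, ?_, ?_⟩
    · intro j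
      show 0 ≤ μ0 j - ε * w j
      rcases le_or_gt (w j) 0 with h | h
      · have : ε * w j ≤ 0 := mul_nonpos_of_nonneg_of_nonpos hε0 h
        linarith [hμ00 j]
      · have := hj₀min j (Finset.mem_filter.mpr ⟨mem_univ _, h⟩)
        rw [hε]
        rw [div_le_div_iff₀ hwj₀ h] at this
        have : μ0 j₀ / w j₀ * w j ≤ μ0 j := by
          rw [div_mul_eq_mul_div, div_le_iff₀ hwj₀]
          linarith
        linarith
    · rw [Finset.sum_sub_distrib, hμ01, ← Finset.mul_sum, hwsum]; ring
    · rw [Finset.sum_congr rfl fun j _ => (sub_smul (μ0 j) (ε * w j) (f j) : _ = _)]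
      rw [Finset.sum_sub_distrib, hμ0x]
      rw [Finset.sum_congr rfl fun j _ => (mul_smul ε (w j) (f j) : _ = _)]
      rw [← Finset.smul_sum, hwvec, smul_zero, sub_zero]
    · show μ0 j₀ - ε * w j₀ = 0
      rw [hε, div_mul_cancel₀ _ (ne_of_gt hwj₀), sub_self]
  obtain ⟨μ, jstar, hμ0', hμ1, hμx, hμj⟩ := hzero
  obtain ⟨c, hcC, hcx⟩ := exists_inner_nonpos (h0 jstar) x
  set t1 : ∀ j, {y // y ∈ C j} := fun j => if h : j = jstar then ⟨c, h ▸ hcC⟩ else t0 j with ht1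
  have hf1 : ∀ j, j ≠ jstar → (t1 j : F) = f j := fun j h => by simp [ht1, h, hf]
  have hf1s : (t1 jstar : F) = c := by simp [ht1]
  have hxK1 : x ∈ K t1 := by
    rw [hK, mem_convexHull_range_iff]
    refine ⟨μ, hμ0', hμ1, ?_⟩
    rw [← hμx]
    refine Finset.sum_congr rfl fun j _ => ?_
    by_cases h : j = jstar
    · subst h; rw [hμj, zero_smul, zero_smul]
    · rw [hf1 j h]
  have hcK1 : c ∈ K t1 := subset_convexHull ℝ _ ⟨jstar, hf1s⟩
  have := min_inner_ge (hKconv t1) hxK1 hcK1 (fun z hz => hxmin' z (hKU t1 hz))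
  have : ‖x‖ ^ 2 ≤ 0 := le_trans this hcx
  linarith

lemma euclid_sum_apply {ι κ : Type*} [Fintype κ] (s : Finset ι) (f : ι → EuclideanSpace ℝ κ)
    (q : κ) : (∑ j ∈ s, f j) q = ∑ j ∈ s, f j q := by
  induction s using Finset.cons_induction with
  | empty => simp
  | cons a s ha ih => rw [Finset.sum_cons, Finset.sum_cons, ← ih]; rfl

lemma sum_ite_val {r : ℕ} (m : ℕ) (hm : m < r) (c : Fin r → ℝ) :
    ∑ i : Fin r, (if (i : ℕ) = m then c i else 0) = c ⟨m, hm⟩ := by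
  have h : ∀ i : Fin r, ((i : ℕ) = m) ↔ (i = ⟨m, hm⟩) := fun i =>
    ⟨fun h => Fin.ext h, fun h => by rw [h]⟩
  simp only [h]
  simp



/-- **Tverberg's theorem.**
Every set `C ⊂ ℝ^d` of `(d+1)(r-1)+1` points has `r` pairwise disjoint subsets
`A_1, …, A_r` with `⋂_{i=1}^r conv(A_i) ≠ ∅`. -/
theorem tverberg (d r : ℕ) (hd : 1 ≤ d) (hr : 2 ≤ r)
    (C : Finset (EuclideanSpace ℝ (Fin d)))
    (hC : C.card = (d + 1) * (r - 1) + 1) :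
    ∃ A : Fin r → Finset (EuclideanSpace ℝ (Fin d)),
      (∀ i, A i ⊆ C) ∧
      (Pairwise fun i i' => Disjoint (A i) (A i')) ∧
      (⋂ i, convexHull ℝ (A i : Set (EuclideanSpace ℝ (Fin d)))).Nonempty := by
  classical
  have hrpos : (0:ℝ) < (r:ℝ) := by exact_mod_cast (by omega : 0 < r)
  have hW : Module.finrank ℝ (EuclideanSpace ℝ (Fin (r-1) × Fin (d+1))) = (r-1)*(d+1) := by
    simp [finrank_euclideanSpace]
  have hn : Module.finrank ℝ (EuclideanSpace ℝ (Fin (r-1) × Fin (d+1))) + 1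
      = (d + 1) * (r - 1) + 1 := by
    rw [hW, Nat.mul_comm]
  set a : Fin ((d + 1) * (r - 1) + 1) → EuclideanSpace ℝ (Fin d) :=
    fun j => ↑(C.equivFin.symm (Fin.cast hC.symm j)) with ha
  have ha_mem : ∀ j, a j ∈ C := fun j => (C.equivFin.symm (Fin.cast hC.symm j)).2
  have ha_inj : Function.Injective a := by
    intro j1 j2 h
    have h1 : C.equivFin.symm (Fin.cast hC.symm j1) = C.equivFin.symm (Fin.cast hC.symm j2) :=
      Subtype.coe_injective h
    have h2 := C.equivFin.symm.injective h1
    simpa [Fin.ext_iff] using congrArg Fin.val h2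
  set hat : EuclideanSpace ℝ (Fin d) → Fin (d+1) → ℝ :=
    fun p m => if h : (m:ℕ) < d then p ⟨m, h⟩ else 1 with hhat
  set v : Fin r → Fin (r-1) → ℝ :=
    fun i k => (if (i:ℕ) = (k:ℕ) then 1 else 0) - (if (i:ℕ) = r - 1 then 1 else 0) with hv
  have hvsum : ∀ k : Fin (r-1), ∑ i : Fin r, v i k = 0 := by
    intro k
    have hk : (k:ℕ) < r := by have := k.isLt; omega
    simp only [hv]
    rw [Finset.sum_sub_distrib,
      sum_ite_val (k:ℕ) hk (fun _ => (1:ℝ)), sum_ite_val (r-1) (by omega) (fun _ => (1:ℝ))]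
    ring
  have hlast : r - 1 < r := by omega
  have hvkey : ∀ c : Fin r → ℝ, (∀ k : Fin (r-1), ∑ i : Fin r, c i * v i k = 0) →
      ∀ i, c i = c ⟨r-1, hlast⟩ := by
    intro c hc i
    by_cases hi : (i:ℕ) = r - 1
    · congr 1
      exact Fin.ext hi
    · have hik : (i:ℕ) < r - 1 := by have := i.isLt; omega
      have hkey := hc ⟨(i:ℕ), hik⟩
      rw [Finset.sum_congr rfl (fun i' _ => show c i' * v i' ⟨(i:ℕ), hik⟩
          = (if (i':ℕ) = (i:ℕ) then c i' else 0) - (if (i':ℕ) = r-1 then c i' else 0) by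
        simp only [hv]
        rw [mul_sub]
        congr 1 <;> split_ifs <;> ring)] at hkey
      rw [Finset.sum_sub_distrib, sum_ite_val (i:ℕ) i.isLt c,
        sum_ite_val (r-1) hlast c] at hkey
      have hii : (⟨(i:ℕ), i.isLt⟩ : Fin r) = i := Fin.ext rfl
      rw [hii] at hkey
      linarith
  set φ : Fin r → EuclideanSpace ℝ (Fin d) → (EuclideanSpace ℝ (Fin (r-1) × Fin (d+1))) :=
    fun i p => WithLp.toLp 2 (fun q => v i q.1 * hat p q.2) with hφ
  set S : Fin ((d + 1) * (r - 1) + 1) → Finset (EuclideanSpace ℝ (Fin (r-1) × Fin (d+1))) :=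
    fun j => univ.image (fun i : Fin r => φ i (a j)) with hS
  have hrange : ∀ j, Set.range (fun i : Fin r => φ i (a j)) = (S j : Set _) := by
    intro j
    simp only [hS]
    rw [coe_image, coe_univ, Set.image_univ]
  have h0S : ∀ j, (0 : EuclideanSpace ℝ (Fin (r-1) × Fin (d+1))) ∈ convexHull ℝ (S j : Set _) := by
    intro j
    rw [← hrange j, mem_convexHull_range_iff]
    refine ⟨fun _ => 1 / r, fun _ => by positivity, ?_, ?_⟩
    · rw [Finset.sum_const, card_univ, Fintype.card_fin, nsmul_eq_mul]
      field_simp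
    · ext q
      rw [euclid_sum_apply,
        Finset.sum_congr rfl (fun i _ => show ((1/(r:ℝ)) • φ i (a j)) q
            = v i q.1 * (1/(r:ℝ) * hat (a j) q.2) by
          rw [PiLp.smul_apply, smul_eq_mul]
          simp only [hφ, PiLp.toLp_apply]
          ring),
        ← Finset.sum_mul, hvsum q.1, zero_mul]
      rfl
  obtain ⟨t, htS, ht0⟩ := colorful_caratheodory hn S h0S
  have htS' : ∀ j, ∃ i, i ∈ (univ : Finset (Fin r)) ∧ φ i (a j) = t j := by
    intro j
    have := htS j
    rw [hS] at this
    simpa [Finset.mem_image] using this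
  choose ι hιu hι using htS'
  obtain ⟨w, hw0, hw1, hwv⟩ := (mem_convexHull_range_iff t 0).mp ht0
  have hcomb : ∀ q : Fin (r-1) × Fin (d+1),
      ∑ j, w j * (v (ι j) q.1 * hat (a j) q.2) = 0 := by
    intro q
    calc ∑ j, w j * (v (ι j) q.1 * hat (a j) q.2)
        = ∑ j, (w j • t j) q := by
          refine Finset.sum_congr rfl fun j _ => ?_
          rw [PiLp.smul_apply, smul_eq_mul, ← hι j]
      _ = (∑ j, w j • t j) q := (euclid_sum_apply _ _ _).symm
      _ = 0 := by rw [hwv]; rfl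
  set B : Fin r → Finset (Fin ((d + 1) * (r - 1) + 1)) :=
    fun i => univ.filter (fun j => ι j = i) with hB
  set cm : Fin r → ℝ := fun i => ∑ j ∈ B i, w j with hcm
  set vs : Fin r → EuclideanSpace ℝ (Fin d) := fun i => ∑ j ∈ B i, w j • a j with hvs
  have hfib : ∀ (f : Fin ((d + 1) * (r - 1) + 1) → ℝ),
      ∑ i : Fin r, ∑ j ∈ B i, f j = ∑ j, f j := fun f =>
    Finset.sum_fiberwise univ ι f
  have hcmeq : ∀ i, cm i = cm ⟨r-1, hlast⟩ := by
    apply hvkey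
    intro k
    have hq := hcomb (k, ⟨d, by omega⟩)
    have hhat1 : ∀ j, hat (a j) ⟨d, by omega⟩ = 1 := fun j => by
      simp only [hhat]
      rw [dif_neg (by simp)]
    rw [Finset.sum_congr rfl (fun j _ => by rw [hhat1 j, mul_one])] at hq
    calc ∑ i : Fin r, cm i * v i k
        = ∑ i : Fin r, ∑ j ∈ B i, w j * v (ι j) k := by
          refine Finset.sum_congr rfl fun i _ => ?_
          simp only [hcm]
          rw [Finset.sum_mul]
          refine Finset.sum_congr rfl fun j hj => ?_
          rw [(Finset.mem_filter.mp hj).2]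
      _ = ∑ j, w j * v (ι j) k := hfib _
      _ = 0 := hq
  have hcm1 : ∑ i : Fin r, cm i = 1 := by
    rw [show ∑ i : Fin r, cm i = ∑ i : Fin r, ∑ j ∈ B i, w j from rfl, hfib, hw1]
  have hcmlast : cm ⟨r-1, hlast⟩ = 1 / r := by
    have h1 : ∑ i : Fin r, cm i = (r:ℝ) * cm ⟨r-1, hlast⟩ := by
      rw [Finset.sum_congr rfl (fun i _ => hcmeq i), Finset.sum_const, card_univ,
        Fintype.card_fin, nsmul_eq_mul]
    rw [h1] at hcm1
    field_simp at hcm1 ⊢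
    linarith
  have hcmpos : ∀ i, 0 < cm i := fun i => by
    rw [hcmeq i, hcmlast]
    positivity
  have hvseq : ∀ i, vs i = vs ⟨r-1, hlast⟩ := by
    intro i
    ext m
    refine hvkey (fun i' => vs i' m) (fun k => ?_) i
    have hq := hcomb (k, ⟨(m:ℕ), by omega⟩)
    have hhat2 : ∀ j, hat (a j) ⟨(m:ℕ), by omega⟩ = a j m := fun j => by
      simp only [hhat]
      rw [dif_pos m.isLt]
    calc ∑ i' : Fin r, vs i' m * v i' k
        = ∑ i' : Fin r, ∑ j ∈ B i', w j * (v (ι j) k * hat (a j) ⟨(m:ℕ), by omega⟩) := by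
          refine Finset.sum_congr rfl fun i' _ => ?_
          simp only [hvs]
          rw [euclid_sum_apply, Finset.sum_mul]
          refine Finset.sum_congr rfl fun j hj => ?_
          rw [PiLp.smul_apply, smul_eq_mul, (Finset.mem_filter.mp hj).2, hhat2 j]
          ring
      _ = ∑ j, w j * (v (ι j) k * hat (a j) ⟨(m:ℕ), by omega⟩) := by
            exact hfib (fun j => w j * (v (ι j) k * hat (a j) ⟨(m:ℕ), by omega⟩))
      _ = 0 := by exact hq
  set p : EuclideanSpace ℝ (Fin d) := (cm ⟨r-1, hlast⟩)⁻¹ • vs ⟨r-1, hlast⟩ with hp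
  refine ⟨fun i => (B i).image a, ?_, ?_, ⟨p, ?_⟩⟩
  · intro i x hx
    obtain ⟨j, hj, rfl⟩ := Finset.mem_image.mp hx
    exact ha_mem j
  · intro i i' hne
    rw [Finset.disjoint_left]
    intro x hx hx'
    obtain ⟨j, hj, rfl⟩ := Finset.mem_image.mp hx
    obtain ⟨j', hj', he⟩ := Finset.mem_image.mp hx'
    have hjj : j' = j := ha_inj he
    subst hjj
    exact hne ((Finset.mem_filter.mp hj).2.symm.trans (Finset.mem_filter.mp hj').2)
  · rw [Set.mem_iInter]
    intro i
    have hmem := Finset.centerMass_mem_convexHull (B i) (w := w) (fun j _ => hw0 j)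
      (hcmpos i) (z := a) (s := (((B i).image a : Finset _) : Set _))
      (fun j hj => Finset.mem_coe.mpr (Finset.mem_image_of_mem a hj))
    have hcmass : (B i).centerMass w a = p := by
      rw [Finset.centerMass, hp,
        show ∑ j ∈ B i, w j = cm i from rfl, show ∑ j ∈ B i, w j • a j = vs i from rfl,
        hcmeq i, hvseq i]
    rwa [hcmass] at hmem
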